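/- arXiv:1208.0682 — 2 statements merged into one kernel-verified Lean document; each statement's English description precedes it below -/
import Mathlib

section
/- Let α be an acceptable universal left-r.e. numbering. Then for every set B ⊆ ℕ, the index set {e : α_e = B} is not equal to B. -/
namespace LeftREPaper

/-- Lexicographic order on binary sequences: `X ≤lex Y` iff `X = Y` or the least point of
disagreement belongs to `Y`. -/
def BoolLexLE (X Y : ℕ → Bool) : Prop :=
  X = Y ∨ ∃ n, X n = false ∧ Y n = true ∧ ∀ m < n, X m = Y m

/-- Lexicographic order on sets of natural numbers (identified with their
characteristic sequences). -/
def SetLexLE (X Y : Set ℕ) : Prop :=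
  X = Y ∨ ∃ n, n ∉ X ∧ n ∈ Y ∧ ∀ m < n, (m ∈ X ↔ m ∈ Y)

/-- `a` is a left-r.e. approximation of the set `A`: uniformly recursive, lexicographically
monotone, and pointwise convergent to `A`. -/
def IsLeftREApprox (a : ℕ → ℕ → Bool) (A : Set ℕ) : Prop :=
  Computable₂ a ∧ (∀ s, BoolLexLE (a s) (a (s + 1))) ∧
    ∀ n, ∃ s₀, ∀ s, s₀ ≤ s → (a s n = true ↔ n ∈ A)

/-- A set is left-r.e. iff it has a left-r.e. approximation. -/
def LeftRE (A : Set ℕ) : Prop := ∃ a, IsLeftREApprox a A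

/-- A left-r.e. numbering: a map `e ↦ α e` together with a uniformly recursive,
lexicographically monotone approximation converging pointwise to `α e`. -/
structure LeftRENumbering where
  α : ℕ → Set ℕ
  approx : ℕ → ℕ → ℕ → Bool
  computable : Computable fun p : ℕ × ℕ × ℕ => approx p.1 p.2.1 p.2.2
  mono : ∀ e s, BoolLexLE (approx e s) (approx e (s + 1))
  lim : ∀ e n, ∃ s₀, ∀ s, s₀ ≤ s → (approx e s n = true ↔ n ∈ α e)

/-- A left-r.e. numbering is universal if every left-r.e. set occurs in it. -/
def LeftRENumbering.Universal (ν : LeftRENumbering) : Prop :=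
  ∀ A : Set ℕ, LeftRE A → ∃ e, ν.α e = A

/-- A class `C` of subsets of ℕ can be made into itself: some universal left-r.e.
numbering has the index set of `C` being itself a member of `C`. -/
def MadeIntoItself (C : Set (Set ℕ)) : Prop :=
  ∃ ν : LeftRENumbering, ν.Universal ∧ {e | ν.α e ∈ C} ∈ C

/-- recursively enumerable subsets of ℕ -/
def RE (A : Set ℕ) : Prop := REPred (· ∈ A)

/-- co-r.e. subsets of ℕ -/
def CoRE (A : Set ℕ) : Prop := REPred (· ∈ Aᶜ)

/-- recursive subsets of ℕ -/
def Rec (A : Set ℕ) : Prop := ComputablePred (· ∈ A)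

/-- `I` is (infinite and) indifferent for `A` with respect to the class `C`. -/
def Indifferent (I A : Set ℕ) (C : Set (Set ℕ)) : Prop :=
  I.Infinite ∧ ∀ X : Set ℕ, symmDiff X A ⊆ I → X ∈ C

/-- `A = {a₀ < a₁ < ⋯}` is retraceable by a total recursive function `f`,
i.e. `f (a_{n+1}) = a_n` (equivalently, on each element of `A` having a predecessor in `A`,
`f` returns that immediate predecessor). -/
def RecRetraceable (A : Set ℕ) : Prop :=
  ∃ f : ℕ → ℕ, Computable f ∧
    ∀ x ∈ A, ∀ y ∈ A, y < x → f x ∈ A ∧ f x < x ∧ y ≤ f x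

/-! ### Oracle computability -/

/-- Codes for oracle partial recursive functions: `Nat.Partrec.Code` plus an oracle query. -/
inductive OracleCode : Type
  | zero | succ | left | right | oracle
  | pair (cf cg : OracleCode)
  | comp (cf cg : OracleCode)
  | prec (cf cg : OracleCode)
  | rfind' (cf : OracleCode)

/-- Evaluation of an oracle code relative to an oracle `O : ℕ → ℕ`. -/
def OracleCode.eval (O : ℕ → ℕ) : OracleCode → ℕ →. ℕ
  | .zero => pure 0
  | .succ => Nat.succ
  | .left => ↑fun n : ℕ => n.unpair.1
  | .right => ↑fun n : ℕ => n.unpair.2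
  | .oracle => ↑fun n : ℕ => O n
  | .pair cf cg => fun n => Nat.pair <$> eval O cf n <*> eval O cg n
  | .comp cf cg => fun n => eval O cg n >>= eval O cf
  | .prec cf cg =>
    Nat.unpaired fun a n =>
      n.rec (eval O cf a) fun y IH => do
        let i ← IH
        eval O cg (Nat.pair a (Nat.pair y i))
  | .rfind' cf =>
    Nat.unpaired fun a m =>
      (Nat.rfind fun n => (fun m => m = 0) <$> eval O cf (Nat.pair a (n + m))).map (· + m)

/-- An effective coding of oracle codes by natural numbers. -/
def OracleCode.encode : OracleCode → ℕ
  | .zero => 0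
  | .succ => 1
  | .left => 2
  | .right => 3
  | .oracle => 4
  | .pair cf cg => 4 * Nat.pair cf.encode cg.encode + 5
  | .comp cf cg => 4 * Nat.pair cf.encode cg.encode + 6
  | .prec cf cg => 4 * Nat.pair cf.encode cg.encode + 7
  | .rfind' cf => 4 * Nat.pair cf.encode cf.encode + 8

/-- `f` is partial recursive relative to the oracle `O`. -/
def RecursiveIn (O : ℕ → ℕ) (f : ℕ →. ℕ) : Prop :=
  ∃ c : OracleCode, c.eval O = f

open Classical in
/-- The characteristic function of a set of naturals. -/
noncomputable def chi (A : Set ℕ) : ℕ → ℕ := fun n => if n ∈ A then 1 else 0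

/-- Turing reducibility between sets of naturals. -/
def TuringLE (A B : Set ℕ) : Prop :=
  RecursiveIn (chi B) fun n => Part.some (chi A n)

/-- The jump of an oracle: the diagonal halting problem relative to it. -/
def jumpSet (O : ℕ → ℕ) : Set ℕ :=
  {n | ∃ c : OracleCode, OracleCode.encode c = n ∧ (c.eval O n).Dom}

/-- The halting problem `K`. -/
def Kset : Set ℕ := jumpSet fun _ => 0

/-- A set is `K`-recursive if it is Turing reducible to the halting problem. -/
def KRecursiveSet (A : Set ℕ) : Prop := TuringLE A Kset

/-- A total function is `K`-recursive if it is recursive relative to the halting problem. -/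
def KRecursiveFun (f : ℕ → ℕ) : Prop :=
  RecursiveIn (chi Kset) fun n => Part.some (f n)

/-- A set `A` is low if its jump is Turing equivalent to the halting problem. -/
def Low (A : Set ℕ) : Prop :=
  TuringLE (jumpSet (chi A)) Kset ∧ TuringLE Kset (jumpSet (chi A))

/-- An acceptable left-r.e. numbering: every left-r.e. numbering reduces to it
via a total recursive function. -/
def LeftRENumbering.Acceptable (ν : LeftRENumbering) : Prop :=
  ∀ μ : LeftRENumbering, ∃ f : ℕ → ℕ, Computable f ∧ ∀ e, ν.α (f e) = μ.α e

/-- A `K`-acceptable left-r.e. numbering: every left-r.e. numbering reduces to it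
via a `K`-recursive total function. -/
def LeftRENumbering.KAcceptable (ν : LeftRENumbering) : Prop :=
  ∀ μ : LeftRENumbering, ∃ f : ℕ → ℕ, KRecursiveFun f ∧ ∀ e, ν.α (f e) = μ.α e

/-! ### Randomness and genericity -/

/-- The length-`n` prefix `A(0)A(1)…A(n-1)` of the characteristic sequence of `A`,
as a binary string. -/
noncomputable def charPrefix (A : Set ℕ) (n : ℕ) : List Bool :=
  (List.range n).map fun i => @decide (i ∈ A) (Classical.propDecidable _)

/-- A machine (partial map from binary strings to binary strings) is prefix-free if no two
distinct strings in its domain are comparable. -/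
def PrefixFreeMachine (ψ : List Bool →. List Bool) : Prop :=
  ∀ x y : List Bool, (ψ x).Dom → (ψ y).Dom → x <+: y → x = y

/-- A universal prefix-free machine: a partial recursive prefix-free machine with full range
which, up to an additive constant, simulates the complexity of every partial recursive
prefix-free machine. -/
def UniversalPFMachine (U : List Bool →. List Bool) : Prop :=
  Partrec U ∧ PrefixFreeMachine U ∧ (∀ x : List Bool, ∃ p, x ∈ U p) ∧
    ∀ ψ : List Bool →. List Bool, Partrec ψ → PrefixFreeMachine ψ →
      ∃ c, ∀ y x, x ∈ ψ y → ∃ p, x ∈ U p ∧ p.length ≤ y.length + c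

/-- `A` is Martin-Löf random: for a (any) universal prefix-free machine, the prefix-free
Kolmogorov complexity of `A↾n` is at least `n - c` for some constant `c`,
i.e. every `U`-program `p` for `A↾n` has `n ≤ |p| + c`. -/
def MLRandom (A : Set ℕ) : Prop :=
  ∀ U : List Bool →. List Bool, UniversalPFMachine U →
    ∃ c, ∀ n p, charPrefix A n ∈ U p → n ≤ p.length + c

/-- `A` is 1-generic: for every r.e. set `W` of binary strings, either some prefix of `A`
belongs to `W` or some prefix of `A` has no extension in `W`. -/
def OneGeneric (A : Set ℕ) : Prop :=
  ∀ W : Set (List Bool), REPred (· ∈ W) →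
    (∃ n, charPrefix A n ∈ W) ∨ ∃ n, ∀ τ ∈ W, ¬ charPrefix A n <+: τ

/-- A set of binary strings is dense if every binary string has an extension in it. -/
def DenseStrings (W : Set (List Bool)) : Prop :=
  ∀ σ : List Bool, ∃ τ ∈ W, σ <+: τ

/-- `A` is weakly 1-generic: every dense r.e. set of binary strings contains a prefix of `A`. -/
def WeaklyOneGeneric (A : Set ℕ) : Prop :=
  ∀ W : Set (List Bool), REPred (· ∈ W) → DenseStrings W →
    ∃ n, charPrefix A n ∈ W

/-- The set `σ·X` whose characteristic sequence is the string `σ` followed by the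
characteristic sequence of `X`. -/
def prependStr (σ : List Bool) (X : Set ℕ) : Set ℕ :=
  {n | (n < σ.length ∧ σ.getD n false = true) ∨ (σ.length ≤ n ∧ n - σ.length ∈ X)}

/-! ### Inclusion modulo finite sets -/

/-- `A ⊆* B`: all but finitely many elements of `A` belong to `B`. -/
def SubsetStar (A B : Set ℕ) : Prop := (A \ B).Finite

/-- `A ⊂* B`: `A ⊆* B` and `B - A` is infinite. -/
def SSubsetStar (A B : Set ℕ) : Prop := SubsetStar A B ∧ (B \ A).Infinite

/-- A minimal left-r.e. set. -/
def MinimalLeftRE (A : Set ℕ) : Prop :=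
  LeftRE A ∧ SSubsetStar ∅ A ∧ ¬ ∃ E : Set ℕ, LeftRE E ∧ SSubsetStar ∅ E ∧ SSubsetStar E A

/-- A maximal left-r.e. set. -/
def MaximalLeftRE (B : Set ℕ) : Prop :=
  LeftRE B ∧ SSubsetStar B Set.univ ∧
    ¬ ∃ E : Set ℕ, LeftRE E ∧ SSubsetStar B E ∧ SSubsetStar E Set.univ


/-! ### Auxiliary machinery for Statement 10 -/

section Statement10Aux

theorem lexle_refl (X : ℕ → Bool) : BoolLexLE X X := Or.inl rfl

theorem lexle_trans {X Y Z : ℕ → Bool} (h1 : BoolLexLE X Y) (h2 : BoolLexLE Y Z) :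
    BoolLexLE X Z := by
  rcases h1 with rfl | ⟨n, hxn, hyn, hagn⟩
  · exact h2
  rcases h2 with rfl | ⟨m, hym, hzm, hagm⟩
  · exact Or.inr ⟨n, hxn, hyn, hagn⟩
  rcases lt_trichotomy n m with h | rfl | h
  · exact Or.inr ⟨n, hxn, (hagm n h).symm.trans hyn,
      fun k hk => (hagn k hk).trans (hagm k (hk.trans h))⟩
  · rw [hyn] at hym; exact absurd hym (by simp)
  · exact Or.inr ⟨m, (hagn m h).trans hym, hzm,
      fun k hk => (hagn k (hk.trans h)).trans (hagm k hk)⟩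

theorem lexle_chain {x : ℕ → ℕ → Bool} (hmono : ∀ s, BoolLexLE (x s) (x (s + 1)))
    {s t : ℕ} (h : s ≤ t) : BoolLexLE (x s) (x t) := by
  induction t, h using Nat.le_induction with
  | base => exact lexle_refl _
  | succ t ht ih => exact lexle_trans ih (hmono t)

theorem lexle_false_left (Y : ℕ → Bool) : BoolLexLE (fun _ => false) Y := by
  by_cases h : ∃ n, Y n = true
  · classical
    refine Or.inr ⟨Nat.find h, rfl, Nat.find_spec h, fun m hm => ?_⟩
    have := Nat.find_min h hm
    simp only [Bool.not_eq_true] at this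
    simp [this]
  · push_neg at h
    simp only [Bool.not_eq_true] at h
    exact Or.inl (funext fun n => (h n).symm)

/-- Truncation of a lexicographically increasing approximation stays increasing. -/
theorem lexle_trunc {x y : ℕ → Bool} (h : BoolLexLE x y) (s : ℕ) :
    BoolLexLE (fun n => if n < s then x n else false)
      (fun n => if n < s + 1 then y n else false) := by
  rcases h with rfl | ⟨n₀, hx, hy, hag⟩
  · by_cases hxs : x s = true
    · refine Or.inr ⟨s, by simp, by simp [hxs], fun m hm => by
        simp [hm, hm.trans (Nat.lt_succ_self s)]⟩
    · simp only [Bool.not_eq_true] at hxs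
      refine Or.inl (funext fun n => ?_)
      rcases lt_trichotomy n s with h | rfl | h
      · simp [h, h.trans (Nat.lt_succ_self s)]
      · simp [Nat.lt_succ_self, hxs]
      · simp [Nat.lt_asymm h, show ¬ n < s + 1 by omega]
  · rcases lt_trichotomy n₀ s with hns | rfl | hns
    · exact Or.inr ⟨n₀, by simp [hns, hx], by simp [hns.trans (Nat.lt_succ_self s), hy],
        fun m hm => by simp [hm.trans hns, (hm.trans hns).trans (Nat.lt_succ_self s), hag m hm]⟩
    · exact Or.inr ⟨n₀, by simp, by simp [Nat.lt_succ_self, hy],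
        fun m hm => by simp [hm, hm.trans (Nat.lt_succ_self n₀), hag m hm]⟩
    · by_cases hxs : x s = true
      · exact Or.inr ⟨s, by simp, by simp [Nat.lt_succ_self, ← hag s hns, hxs],
          fun m hm => by simp [hm, hm.trans (Nat.lt_succ_self s), hag m (hm.trans hns)]⟩
      · simp only [Bool.not_eq_true] at hxs
        refine Or.inl (funext fun n => ?_)
        rcases lt_trichotomy n s with h | rfl | h
        · simp [h, h.trans (Nat.lt_succ_self s), hag n (h.trans hns)]
        · simp [Nat.lt_succ_self, ← hag n hns, hxs]
        · simp [Nat.lt_asymm h, show ¬ n < s + 1 by omega]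

/-- The limit set of a pointwise eventually-constant approximation. -/
def limitSet (m : ℕ → ℕ → ℕ → Bool) (p : ℕ) : Set ℕ :=
  {n | ∃ s₀, ∀ s ≥ s₀, m p s n = true}

theorem lim_of_stab {m : ℕ → ℕ → ℕ → Bool}
    (hstab : ∀ p n, ∃ s₀, ∀ s ≥ s₀, m p s n = m p s₀ n) :
    ∀ p n, ∃ s₀, ∀ s, s₀ ≤ s → (m p s n = true ↔ n ∈ limitSet m p) := by
  intro p n
  obtain ⟨s₀, h⟩ := hstab p n
  refine ⟨s₀, fun s hs => ?_⟩
  constructor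
  · intro ht
    exact ⟨s₀, fun t htt => (h t htt).trans ((h s hs).symm.trans ht)⟩
  · rintro ⟨s₁, h1⟩
    have h2 := h1 (max s₀ s₁) (le_max_right _ _)
    rw [h _ (le_max_left _ _)] at h2
    exact (h s hs).trans h2

theorem limitSet_eq' {m : ℕ → ℕ → ℕ → Bool} {p : ℕ} {c : ℕ → Bool}
    (h : ∀ n, ∃ S, ∀ s ≥ S, m p s n = c n) :
    limitSet m p = {n | c n = true} := by
  ext n
  obtain ⟨S, hS⟩ := h n
  constructor
  · rintro ⟨s₀, hs⟩
    have h1 := hs (max S s₀) (le_max_right _ _)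
    rw [hS _ (le_max_left _ _)] at h1
    exact h1
  · intro hc
    exact ⟨S, fun s hs => (hS s hs).trans hc⟩

theorem bool_eq_decide {p : Prop} [Decidable p] {v : Bool} (h : v = true ↔ p) :
    v = decide p := by
  by_cases hp : p
  · simpa [hp] using h.mpr hp
  · have : ¬ v = true := fun hv => hp (h.mp hv)
    simp only [Bool.not_eq_true] at this
    simp [this, hp]

theorem computable_mem_list (l : List ℕ) : Computable fun n => decide (n ∈ l) := by
  induction l with
  | nil => exact (Computable.const false).of_eq fun n => by simp
  | cons a t ih =>
      have key : ∀ n : ℕ, decide (n ∈ a :: t) = cond (decide (n = a)) true (decide (n ∈ t)) := by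
        intro n; by_cases h : n = a <;> by_cases h2 : n ∈ t <;> simp [h, h2]
      exact (Computable.cond ((PrimrecPred.decide (Primrec.eq.comp Primrec.id (Primrec.const a))).to_comp)
        (Computable.const true) ih).of_eq fun n => (key n).symm

/-- the diagonal predicate: the `p`-th oracle-free computation (code in the first
coordinate, input in the second) halts with a value outside `B`. -/
def QProp (B : Set ℕ) (p : ℕ) : Prop :=
  ∃ v, v ∈ (Denumerable.ofNat Nat.Partrec.Code p.unpair.1).eval p.unpair.2 ∧ v ∉ B

end Statement10Aux

section Statement10Main

open Nat.Partrec.Code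

/-- Given an index `b` for `B` in the numbering `ν`, with `B` nonempty, there is a left-r.e.
numbering `μ` with `μ_p = B` iff the `p`-th computation halts with a value outside `B`. -/
theorem exists_diag_numbering (ν : LeftRENumbering) {B : Set ℕ} {b : ℕ} (hb : ν.α b = B)
    (hBne : B.Nonempty) :
    ∃ μ : LeftRENumbering, ∀ p, (μ.α p = B ↔ QProp B p) := by
  classical
  set a : ℕ → ℕ → Bool := fun s n => ν.approx b s n with ha
  have hacomp : Computable₂ a :=
    ν.computable.comp ((Computable.const b).pair (Computable.fst.pair Computable.snd))
  have amono : ∀ s, BoolLexLE (a s) (a (s + 1)) := fun s => ν.mono b s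
  have alim : ∀ n, ∃ s₀, ∀ s ≥ s₀, (a s n = true ↔ n ∈ B) := by
    intro n; obtain ⟨s₀, h⟩ := ν.lim b n
    exact ⟨s₀, fun s hs => by rw [← hb]; exact h s hs⟩
  set χB : ℕ → Bool := fun n => decide (n ∈ B) with hχB
  have hχBset : {n | χB n = true} = B := by ext n; simp [hχB]
  have a_settle : ∀ n, ∃ s₀, ∀ s ≥ s₀, a s n = χB n := by
    intro n; obtain ⟨s₀, h⟩ := alim n
    exact ⟨s₀, fun s hs => by rw [bool_eq_decide (h s hs), hχB]⟩
  set cd : ℕ → Nat.Partrec.Code := fun p => Denumerable.ofNat Nat.Partrec.Code p.unpair.1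
    with hcd
  set arg : ℕ → ℕ := fun p => p.unpair.2 with harg
  have hQdef : ∀ p, QProp B p ↔ ∃ v, v ∈ (cd p).eval (arg p) ∧ v ∉ B := by
    intro p; simp only [QProp, hcd, harg]
  have hevalnc : Computable fun q : ℕ × ℕ => evaln q.2 (cd q.1) (arg q.1) := by
    have : Primrec fun q : ℕ × ℕ => evaln q.2 (cd q.1) (arg q.1) := by
      simp only [hcd, harg]
      exact primrec_evaln.comp <| Primrec.pair
        (Primrec.pair Primrec.snd
          ((Primrec.ofNat Nat.Partrec.Code).comp
            (Primrec.fst.comp (Primrec.unpair.comp Primrec.fst))))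
        (Primrec.snd.comp (Primrec.unpair.comp Primrec.fst))
    exact this.to_comp
  by_cases hfin : B.Finite
  · -- B finite: switch from ∅ to following B when the computation halts outside B
    obtain ⟨g, hgcomp, hg⟩ : ∃ g : ℕ → Bool, Computable g ∧ ∀ n, (g n = true ↔ n ∈ B) := by
      refine ⟨fun n => decide (n ∈ hfin.toFinset.toList), computable_mem_list _, fun n => ?_⟩
      simp [Finset.mem_toList, Set.Finite.mem_toFinset]
    set step : ℕ → ℕ → Bool := fun p t =>
      (evaln t (cd p) (arg p)).casesOn false (fun v => cond (g v) false true) with hstep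
    have hstepc : Computable₂ step := by
      simp only [hstep]
      exact Computable.to₂ <| Computable.option_casesOn hevalnc (Computable.const false)
        (Computable.to₂ (Computable.cond (hgcomp.comp Computable.snd)
          (Computable.const false) (Computable.const true)))
    set E : ℕ → ℕ → Bool := fun p s =>
      Nat.rec false (fun t ih => cond ih true (step p t)) s with hE
    have hE0 : ∀ p, E p 0 = false := fun _ => rfl
    have hEs : ∀ p s, E p (s + 1) = cond (E p s) true (step p s) := fun _ _ => rfl
    have hEc : Computable₂ E := by
      simp only [hE]
      exact Computable.to₂ <| Computable.nat_rec Computable.snd (Computable.const false)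
        (Computable.to₂ (Computable.cond (Computable.snd.comp Computable.snd)
          (Computable.const true)
          (hstepc.comp (Computable.fst.comp Computable.fst)
            (Computable.fst.comp Computable.snd))))
    have Emono : ∀ p {s t}, s ≤ t → E p s = true → E p t = true := by
      intro p s t h hs
      induction t, h using Nat.le_induction with
      | base => exact hs
      | succ t ht ih => rw [hEs, ih]; rfl
    set m : ℕ → ℕ → ℕ → Bool := fun p s n => cond (E p s) (a s n) false with hm
    have hmc : Computable fun q : ℕ × ℕ × ℕ => m q.1 q.2.1 q.2.2 := by
      simp only [hm]
      exact Computable.cond (hEc.comp Computable.fst (Computable.fst.comp Computable.snd))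
        (hacomp.comp (Computable.fst.comp Computable.snd)
          (Computable.snd.comp Computable.snd)) (Computable.const false)
    have hmono : ∀ p s, BoolLexLE (m p s) (m p (s + 1)) := by
      intro p s
      cases hc : E p s
      · cases hc2 : E p (s + 1)
        · simp only [hm, hc, hc2, Bool.cond_false]
          exact lexle_refl _
        · simp only [hm, hc, hc2, Bool.cond_false, Bool.cond_true]
          exact lexle_false_left _
      · have hc2 : E p (s + 1) = true := Emono p (Nat.le_succ s) hc
        simp only [hm, hc, hc2, Bool.cond_true]
        exact amono s
    have hfires_of_Q : ∀ p, QProp B p → ∃ s, E p s = true := by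
      intro p hQp
      obtain ⟨v, hv, hvB⟩ := (hQdef p).mp hQp
      obtain ⟨k, hk⟩ := evaln_complete.mp hv
      have hgv : g v = false := by
        have : ¬ g v = true := fun h' => hvB ((hg v).mp h')
        simpa only [Bool.not_eq_true] using this
      have hstepk : step p k = true := by
        simp only [Option.mem_def] at hk
        simp only [hstep, hk, hgv]
        rfl
      refine ⟨k + 1, ?_⟩
      rw [hEs, hstepk]
      cases E p k <;> rfl
    have hQ_of_step : ∀ p t, step p t = true → QProp B p := by
      intro p t hst
      simp only [hstep] at hst
      cases hev : evaln t (cd p) (arg p) with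
      | none => rw [hev] at hst; exact absurd hst (by simp)
      | some v =>
        rw [hev] at hst
        have hst' : (bif g v then false else true) = true := hst
        have hvB : v ∉ B := by
          intro hvB
          rw [(hg v).mpr hvB] at hst'
          exact absurd hst' (by simp)
        exact (hQdef p).mpr ⟨v, evaln_sound (x := v) (by rw [Option.mem_def, hev]), hvB⟩
    have hQ_of_fires : ∀ p s, E p s = true → QProp B p := by
      intro p s
      induction s with
      | zero => intro h; rw [hE0] at h; exact absurd h (by simp)
      | succ s ih =>
        intro h
        rw [hEs] at h
        cases hc : E p s
        · rw [hc] at h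
          exact hQ_of_step p s h
        · exact ih hc
    have hstab : ∀ p n, ∃ s₀, ∀ s ≥ s₀, m p s n = m p s₀ n := by
      intro p n
      by_cases hev : ∃ s, E p s = true
      · obtain ⟨S, hS⟩ := hev
        obtain ⟨s₀, h₀⟩ := a_settle n
        refine ⟨max S s₀, fun s hs => ?_⟩
        have e1 : E p s = true := Emono p (le_trans (le_max_left _ _) hs) hS
        have e2 : E p (max S s₀) = true := Emono p (le_max_left _ _) hS
        simp only [hm, e1, e2, Bool.cond_true]
        rw [h₀ s (le_trans (le_max_right _ _) hs), h₀ _ (le_max_right _ _)]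
      · push_neg at hev
        simp only [Bool.not_eq_true] at hev
        exact ⟨0, fun s _ => by simp only [hm, hev s, hev 0, Bool.cond_false]⟩
    refine ⟨⟨limitSet m, m, hmc, hmono, lim_of_stab hstab⟩, fun p => ?_⟩
    show limitSet m p = B ↔ QProp B p
    by_cases hev : ∃ s, E p s = true
    · obtain ⟨S, hS⟩ := hev
      have hval : limitSet m p = B := by
        rw [limitSet_eq' (c := χB) ?_, hχBset]
        intro n
        obtain ⟨s₀, h₀⟩ := a_settle n
        refine ⟨max S s₀, fun s hs => ?_⟩
        have e1 : E p s = true := Emono p (le_trans (le_max_left _ _) hs) hS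
        simp only [hm, e1, Bool.cond_true]
        exact h₀ s (le_trans (le_max_right _ _) hs)
      simp only [hval, true_iff]
      exact hQ_of_fires p S hS
    · push_neg at hev
      simp only [Bool.not_eq_true] at hev
      have hval : limitSet m p = ∅ := by
        rw [limitSet_eq' (c := fun _ => false) fun n =>
          ⟨0, fun s _ => by simp only [hm, hev s, Bool.cond_false]⟩]
        simp
      rw [hval]
      constructor
      · intro h; exact absurd h.symm (Set.nonempty_iff_ne_empty.mp hBne)
      · intro hQp
        obtain ⟨s, hs⟩ := hfires_of_Q p hQp
        rw [hev s] at hs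
        exact absurd hs (by simp)
  · -- B infinite: follow truncations of the approximation of B, advancing only when the
    -- computation is currently seen to halt with a value (currently) outside B
    set D : ℕ → ℕ → Bool := fun p t =>
      (evaln t (cd p) (arg p)).casesOn false (fun v => cond (a t v) false true) with hD
    have hDc : Computable₂ D := by
      simp only [hD]
      exact Computable.to₂ <| Computable.option_casesOn hevalnc (Computable.const false)
        (Computable.to₂ (Computable.cond
          (hacomp.comp (Computable.snd.comp Computable.fst) Computable.snd)
          (Computable.const false) (Computable.const true)))
    set u : ℕ → ℕ → ℕ := fun p s =>
      Nat.rec 0 (fun t ih => ih + cond (D p t) 1 0) s with hu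
    have hus : ∀ p s, u p (s + 1) = u p s + cond (D p s) 1 0 := fun _ _ => rfl
    have huc : Computable₂ u := by
      simp only [hu]
      exact Computable.to₂ <| Computable.nat_rec Computable.snd (Computable.const 0)
        (Computable.to₂ ((Primrec.nat_add.to_comp).comp
          (Computable.snd.comp Computable.snd)
          (Computable.cond (hDc.comp (Computable.fst.comp Computable.fst)
            (Computable.fst.comp Computable.snd))
            (Computable.const 1) (Computable.const 0))))
    have umono : ∀ p {s t}, s ≤ t → u p s ≤ u p t := by
      intro p s t h
      induction t, h using Nat.le_induction with
      | base => exact le_rfl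
      | succ t ht ih => rw [hus]; exact le_trans ih (Nat.le_add_right _ _)
    set T : ℕ → ℕ → Bool := fun t n => if n < t then a t n else false with hT
    have Tmono : ∀ t, BoolLexLE (T t) (T (t + 1)) := fun t => lexle_trunc (amono t) t
    have Tsettle : ∀ n, ∃ S, ∀ t ≥ S, T t n = χB n := by
      intro n
      obtain ⟨s₀, h₀⟩ := a_settle n
      refine ⟨max s₀ (n + 1), fun t ht => ?_⟩
      have h1 : n < t := lt_of_lt_of_le (Nat.lt_succ_self n) (le_trans (le_max_right _ _) ht)
      simp only [hT, if_pos h1]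
      exact h₀ t (le_trans (le_max_left _ _) ht)
    set m : ℕ → ℕ → ℕ → Bool := fun p s n => T (u p s) n with hm
    have hmc : Computable fun q : ℕ × ℕ × ℕ => m q.1 q.2.1 q.2.2 := by
      have huq : Computable fun q : ℕ × ℕ × ℕ => u q.1 q.2.1 :=
        huc.comp Computable.fst (Computable.fst.comp Computable.snd)
      refine (Computable.cond
        ((Primrec.nat_lt.decide.to_comp).comp (Computable.snd.comp Computable.snd) huq)
        (hacomp.comp huq (Computable.snd.comp Computable.snd))
        (Computable.const false)).of_eq fun q => ?_
      simp only [hm, hT]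
      by_cases h : q.2.2 < u q.1 q.2.1 <;> simp [h]
    have hmono : ∀ p s, BoolLexLE (m p s) (m p (s + 1)) := by
      intro p s
      simp only [hm]
      exact lexle_chain Tmono (umono p (Nat.le_succ s))
    have hDcof : ∀ p, QProp B p → ∃ Tq, ∀ t ≥ Tq, D p t = true := by
      intro p hQp
      obtain ⟨v, hv, hvB⟩ := (hQdef p).mp hQp
      obtain ⟨k, hk⟩ := evaln_complete.mp hv
      obtain ⟨s₀, h₀⟩ := a_settle v
      have hav : ∀ t ≥ s₀, a t v = false := by
        intro t ht
        rw [h₀ t ht, hχB]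
        simp [hvB]
      refine ⟨max k s₀, fun t ht => ?_⟩
      have hk' : evaln t (cd p) (arg p) = some v :=
        Option.mem_def.mp (evaln_mono (le_trans (le_max_left _ _) ht) hk)
      simp only [hD, hk']
      rw [hav t (le_trans (le_max_right _ _) ht)]
      rfl
    have hDvan : ∀ p, ¬ QProp B p → ∃ Tq, ∀ t ≥ Tq, D p t = false := by
      intro p hnQ
      rw [hQdef p] at hnQ
      push_neg at hnQ
      by_cases hdom : ∃ v, v ∈ (cd p).eval (arg p)
      · obtain ⟨v, hv⟩ := hdom
        have hvB : v ∈ B := hnQ v hv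
        obtain ⟨s₀, h₀⟩ := a_settle v
        have hav : ∀ t ≥ s₀, a t v = true := by
          intro t ht
          rw [h₀ t ht, hχB]
          simp [hvB]
        refine ⟨s₀, fun t ht => ?_⟩
        simp only [hD]
        cases hev : evaln t (cd p) (arg p) with
        | none => rfl
        | some w =>
          have hweq : w = v :=
            Part.mem_unique (evaln_sound (x := w) (by rw [Option.mem_def, hev])) hv
          subst hweq
          show cond (a t w) false true = false
          rw [hav t ht]
          rfl
      · refine ⟨0, fun t _ => ?_⟩
        simp only [hD]
        cases hev : evaln t (cd p) (arg p) with
        | none => rfl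
        | some w =>
          exact absurd ⟨w, evaln_sound (x := w) (by rw [Option.mem_def, hev])⟩ hdom
    have hunb : ∀ p, QProp B p → ∀ N, ∃ s, N ≤ u p s := by
      intro p hQp N
      obtain ⟨Tq, hTq⟩ := hDcof p hQp
      have key : ∀ j, j ≤ u p (Tq + j) := by
        intro j
        induction j with
        | zero => exact Nat.zero_le _
        | succ j ih =>
          have h1 : u p (Tq + j + 1) = u p (Tq + j) + 1 := by
            rw [hus, hTq (Tq + j) (Nat.le_add_right _ _)]
            rfl
          show j + 1 ≤ u p (Tq + j + 1)
          omega
      exact ⟨Tq + N, key N⟩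
    have hconst : ∀ p, ¬ QProp B p → ∃ Tq, ∀ s ≥ Tq, u p s = u p Tq := by
      intro p hnQ
      obtain ⟨Tq, hTq⟩ := hDvan p hnQ
      refine ⟨Tq, fun s hs => ?_⟩
      induction s, hs using Nat.le_induction with
      | base => rfl
      | succ s hs ih => rw [hus, hTq s hs, ih]; rfl
    have hstab : ∀ p n, ∃ s₀, ∀ s ≥ s₀, m p s n = m p s₀ n := by
      intro p n
      by_cases hQp : QProp B p
      · obtain ⟨S₁, h1⟩ := Tsettle n
        obtain ⟨s₁, hs₁⟩ := hunb p hQp S₁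
        refine ⟨s₁, fun s hs => ?_⟩
        simp only [hm]
        rw [h1 _ (le_trans hs₁ (umono p hs)), h1 _ hs₁]
      · obtain ⟨Tq, hTq⟩ := hconst p hQp
        refine ⟨Tq, fun s hs => ?_⟩
        simp only [hm]
        rw [hTq s hs]
    refine ⟨⟨limitSet m, m, hmc, hmono, lim_of_stab hstab⟩, fun p => ?_⟩
    show limitSet m p = B ↔ QProp B p
    by_cases hQp : QProp B p
    · have hval : limitSet m p = B := by
        rw [limitSet_eq' (c := χB) ?_, hχBset]
        intro n
        obtain ⟨S₁, h1⟩ := Tsettle n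
        obtain ⟨s₁, hs₁⟩ := hunb p hQp S₁
        refine ⟨s₁, fun s hs => ?_⟩
        simp only [hm]
        exact h1 _ (le_trans hs₁ (umono p hs))
      exact iff_of_true hval hQp
    · obtain ⟨Tq, hTq⟩ := hconst p hQp
      have hval : limitSet m p = {n | T (u p Tq) n = true} :=
        limitSet_eq' fun n => ⟨Tq, fun s hs => by simp only [hm]; rw [hTq s hs]⟩
      have hne : limitSet m p ≠ B := by
        rw [hval]
        intro hEq2
        apply hfin
        refine Set.Finite.subset (Set.finite_lt_nat (u p Tq)) ?_
        intro n hn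
        have hn' : n ∈ {n | T (u p Tq) n = true} := by rw [hEq2]; exact hn
        simp only [hT, Set.mem_setOf_eq] at hn'
        simp only [Set.mem_setOf_eq]
        by_contra hlt
        rw [if_neg hlt] at hn'
        exact absurd hn' (by simp)
      exact iff_of_false hne hQp

end Statement10Main

/-- In an acceptable universal left-r.e. numbering no set equals its own
index set. -/
theorem statement_10 (ν : LeftRENumbering) (huniv : ν.Universal) (hacc : ν.Acceptable)
    (B : Set ℕ) : {e | ν.α e = B} ≠ B := by
  intro hEq
  by_cases hB0 : B = ∅
  · have hre : LeftRE (∅ : Set ℕ) := by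
      refine ⟨fun _ _ => false, ?_, fun s => Or.inl rfl, fun n => ⟨0, fun s _ => by simp⟩⟩
      exact Computable.to₂ (Computable.const false)
    obtain ⟨e, he⟩ := huniv ∅ hre
    have hmem : e ∈ {e | ν.α e = B} := by simp only [Set.mem_setOf_eq, he, hB0]
    rw [hEq, hB0] at hmem
    exact absurd hmem (Set.notMem_empty e)
  · obtain ⟨b, hbB⟩ := Set.nonempty_iff_ne_empty.mpr hB0
    have hmem : ∀ e, ν.α e = B ↔ e ∈ B := by
      intro e
      constructor
      · intro h; rw [← hEq]; exact h
      · intro h; rw [← hEq] at h; exact h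
    obtain ⟨μ, hspec⟩ := exists_diag_numbering ν ((hmem b).mpr hbB) ⟨b, hbB⟩
    obtain ⟨h, hhcomp, hα⟩ := hacc μ
    have hF : Computable₂ fun (c : Nat.Partrec.Code) (e : ℕ) =>
        h (Nat.pair (Encodable.encode c) e) :=
      Computable.to₂ (hhcomp.comp ((Primrec₂.natPair.to_comp).comp
        (Computable.encode.comp Computable.fst) Computable.snd))
    obtain ⟨c, hc⟩ := Nat.Partrec.Code.fixed_point₂ hF.partrec₂
    set x := h (Nat.pair (Encodable.encode c) 0) with hx
    have hxe : x ∈ c.eval 0 := by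
      rw [hc]
      exact Part.mem_some _
    have hQ : QProp B (Nat.pair (Encodable.encode c) 0) ↔ x ∉ B := by
      constructor
      · rintro ⟨v, hv, hvB⟩
        simp only [Nat.unpair_pair, Denumerable.ofNat_encode] at hv
        rwa [Part.mem_unique hv hxe] at hvB
      · intro hxB
        refine ⟨x, ?_, hxB⟩
        simp only [Nat.unpair_pair, Denumerable.ofNat_encode]
        exact hxe
    have hcontra : x ∈ B ↔ x ∉ B := by
      rw [← hQ, ← hspec (Nat.pair (Encodable.encode c) 0),
        ← hα (Nat.pair (Encodable.encode c) 0), ← hx]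
      exact (hmem x).symm
    exact iff_not_self hcontra


end LeftREPaper
end

section
/- No recursively enumerable set is a maximal left-r.e. set. -/
namespace LeftREPaper

namespace Stmt14Aux

/-- count of `false` values of `f` on `[0,n]`. -/
def cnt (f : ℕ → Bool) : ℕ → ℕ
  | 0 => cond (f 0) 0 1
  | n+1 => cnt f n + cond (f (n+1)) 0 1

@[simp] lemma cnt_zero (f : ℕ → Bool) : cnt f 0 = cond (f 0) 0 1 := rfl
@[simp] lemma cnt_succ (f : ℕ → Bool) (n : ℕ) :
    cnt f (n+1) = cnt f n + cond (f (n+1)) 0 1 := rfl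

/-- row of the modified set. -/
def Erow (f : ℕ → Bool) (n : ℕ) : Bool := f n || decide (cnt f n % 2 = 1)

lemma cnt_congr {f g : ℕ → Bool} (n : ℕ) (h : ∀ m ≤ n, f m = g m) : cnt f n = cnt g n := by
  induction n with
  | zero => simp [h 0 (le_refl 0)]
  | succ n ih =>
      simp [cnt_succ, ih (fun m hm => h m (hm.trans (Nat.le_succ n))), h (n+1) le_rfl]

lemma Erow_congr {f g : ℕ → Bool} (n : ℕ) (h : ∀ m ≤ n, f m = g m) : Erow f n = Erow g n := by
  simp [Erow, h n le_rfl, cnt_congr n h]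

lemma cnt_const_between {f : ℕ → Bool} {d n : ℕ} (hdn : d ≤ n)
    (h : ∀ m, d < m → m ≤ n → f m = true) : cnt f n = cnt f d := by
  induction n, hdn using Nat.le_induction with
  | base => rfl
  | succ n hdn ih =>
      rw [cnt_succ, h (n+1) (by omega) le_rfl]
      simpa using ih (fun m h1 h2 => h m h1 (by omega))

lemma cnt_step {f : ℕ → Bool} {d m1 : ℕ} (hdm : d < m1) (hm1 : f m1 = false)
    (hbet : ∀ m, d < m → m < m1 → f m = true) : cnt f m1 = cnt f d + 1 := by
  obtain ⟨k, rfl⟩ : ∃ k, m1 = k + 1 := ⟨m1 - 1, by omega⟩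
  rw [cnt_succ, hm1, cnt_const_between (show d ≤ k by omega)
    (fun m h1 h2 => hbet m h1 (by omega))]
  rfl

lemma cnt_update {f : ℕ → Bool} {d : ℕ} (hfd : f d = false) :
    ∀ n, d ≤ n → cnt f n = cnt (Function.update f d true) n + 1 := by
  intro n hdn
  induction n, hdn using Nat.le_induction with
  | base =>
      cases d with
      | zero => simp [hfd, Function.update]
      | succ k =>
          have hcc : cnt f k = cnt (Function.update f (k+1) true) k :=
            cnt_congr k (fun m hm =>
              (Function.update_of_ne (by omega) true f).symm)
          rw [cnt_succ, cnt_succ, hfd, Function.update_self, hcc]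
          rfl
  | succ n hdn ih =>
      rw [cnt_succ, cnt_succ, ih, Function.update_of_ne (by omega)]
      ring

lemma lex_trans {X Y Z : ℕ → Bool} (h1 : BoolLexLE X Y) (h2 : BoolLexLE Y Z) :
    BoolLexLE X Z := by
  rcases h1 with rfl | ⟨n1, hX1, hY1, hb1⟩
  · exact h2
  rcases h2 with rfl | ⟨n2, hY2, hZ2, hb2⟩
  · exact Or.inr ⟨n1, hX1, hY1, hb1⟩
  rcases lt_trichotomy n1 n2 with h | rfl | h
  · exact Or.inr ⟨n1, hX1, (hb2 n1 h).symm ▸ hY1, fun m hm => (hb1 m hm).trans (hb2 m (hm.trans h))⟩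
  · rw [hY1] at hY2; cases hY2
  · exact Or.inr ⟨n2, (hb1 n2 h).symm ▸ hY2, hZ2, fun m hm => (hb1 m (hm.trans h)).trans (hb2 m hm)⟩

lemma onestep {f : ℕ → Bool} {d : ℕ} (hfd : f d = false)
    (hab : ∃ m, d < m ∧ f m = false) :
    BoolLexLE (Erow f) (Erow (Function.update f d true)) := by
  classical
  set g := Function.update f d true with hg
  have hgd : g d = true := Function.update_self _ _ _
  have hglt : ∀ m, m ≠ d → g m = f m := fun m hm => Function.update_of_ne hm _ _
  have hbelow : ∀ m, m < d → Erow f m = Erow g m := by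
    intro m hm
    exact Erow_congr m (fun k hk => (hglt k (by omega)).symm)
  by_cases hp : cnt f d % 2 = 1
  · -- first difference at the least false position above d
    have hE : ∃ m, d < m ∧ f m = false := hab
    set m1 := Nat.find hE with hm1def
    obtain ⟨hdm1, hfm1⟩ : d < m1 ∧ f m1 = false := Nat.find_spec hE
    have hbet : ∀ m, d < m → m < m1 → f m = true := by
      intro m h1 h2
      have := Nat.find_min hE h2
      simp only [h1, true_and, Bool.not_eq_false] at this
      exact this
    have hcnt1 : cnt f m1 = cnt f d + 1 := cnt_step hdm1 hfm1 hbet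
    have hcntg : cnt g m1 = cnt f d := by
      have h2 := cnt_update hfd m1 (le_of_lt hdm1)
      rw [← hg] at h2
      omega
    refine Or.inr ⟨m1, ?_, ?_, ?_⟩
    · simp only [Erow, hfm1, Bool.false_or, hcnt1, decide_eq_false_iff_not]
      omega
    · simp only [Erow, hglt m1 (by omega), hfm1, Bool.false_or, hcntg, decide_eq_true_eq]
      exact hp
    · intro m hm
      rcases lt_trichotomy m d with h | rfl | h
      · exact hbelow m h
      · simp [Erow, hfd, hgd, hp]
      · have hfm : f m = true := hbet m h hm
        simp [Erow, hfm, hglt m (by omega)]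
  · refine Or.inr ⟨d, ?_, ?_, fun m hm => hbelow m hm⟩
    · simp only [Erow, hfd, Bool.false_or, decide_eq_false_iff_not]
      exact hp
    · simp [Erow, hgd]

lemma lex_mono_aux : ∀ (k : ℕ) (f g : ℕ → Bool) (N : ℕ),
    (∀ m, f m = true → g m = true) → (∀ m, N ≤ m → g m = false) →
    ((Finset.range N).filter (fun m => ¬ (f m = g m))).card = k →
    BoolLexLE (Erow f) (Erow g) := by
  intro k
  induction k with
  | zero =>
      intro f g N hle hN hcard
      have hfg : f = g := by
        funext m
        rcases lt_or_ge m N with h | h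
        · by_contra hne
          have : m ∈ (Finset.range N).filter (fun m => ¬ (f m = g m)) := by
            simp [Finset.mem_filter, Finset.mem_range, h, hne]
          rw [Finset.card_eq_zero.1 hcard] at this
          simp at this
        · have hgm := hN m h
          have hfm : f m = false := by
            cases hf : f m
            · rfl
            · exact absurd ((hle m hf).symm.trans hgm) (by decide)
          rw [hfm, hgm]
      exact Or.inl (by rw [hfg])
  | succ k ih =>
      intro f g N hle hN hcard
      have hne : ((Finset.range N).filter (fun m => ¬ (f m = g m))).Nonempty := by
        rw [← Finset.card_pos, hcard]; omega
      obtain ⟨d, hd⟩ := hne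
      rw [Finset.mem_filter, Finset.mem_range] at hd
      obtain ⟨hdN, hdne⟩ := hd
      have hfd : f d = false := by
        cases hf : f d
        · rfl
        · exact absurd (hle d hf) (by rw [hf] at hdne; intro h; exact hdne (h ▸ rfl))
      have hgd : g d = true := by
        cases hg : g d
        · rw [hfd, hg] at hdne; exact absurd rfl hdne
        · rfl
      have hfN : f N = false := by
        cases hf : f N
        · rfl
        · exact absurd ((hle N hf).symm.trans (hN N le_rfl)) (by decide)
      set h := Function.update f d true with hhdef
      have step1 : BoolLexLE (Erow f) (Erow h) :=
        onestep hfd ⟨N, hdN, hfN⟩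
      have hhle : ∀ m, h m = true → g m = true := by
        intro m hm
        by_cases hmd : m = d
        · exact hmd ▸ hgd
        · rw [hhdef, Function.update_of_ne hmd] at hm
          exact hle m hm
      have hcard' : ((Finset.range N).filter (fun m => ¬ (h m = g m))).card = k := by
        have heq : (Finset.range N).filter (fun m => ¬ (h m = g m))
            = ((Finset.range N).filter (fun m => ¬ (f m = g m))).erase d := by
          ext m
          simp only [Finset.mem_filter, Finset.mem_erase, Finset.mem_range]
          constructor
          · intro ⟨h1, h2⟩
            by_cases hmd : m = d
            · subst hmd; rw [hhdef] at h2; simp [hgd] at h2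
            · rw [hhdef, Function.update_of_ne hmd] at h2
              exact ⟨hmd, h1, h2⟩
          · intro ⟨h1, h2, h3⟩
            rw [hhdef, Function.update_of_ne h1]
            exact ⟨h2, h3⟩
        rw [heq, Finset.card_erase_of_mem (by simp [Finset.mem_filter, Finset.mem_range, hdN, hdne]), hcard]
        omega
      exact lex_trans step1 (ih h g N hhle hN hcard')

lemma lex_mono (f g : ℕ → Bool) (N : ℕ)
    (hle : ∀ m, f m = true → g m = true) (hN : ∀ m, N ≤ m → g m = false) :
    BoolLexLE (Erow f) (Erow g) :=
  lex_mono_aux _ f g N hle hN rfl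

end Stmt14Aux

/-- No r.e. set is a maximal left-r.e. set. -/
theorem statement_14 (A : Set ℕ) (hA : RE A) : ¬ MaximalLeftRE A := by
  classical
  open Stmt14Aux in
  rintro ⟨hAl, hAco, hmax3⟩
  -- the characteristic function of A
  set χ : ℕ → Bool := fun n => decide (n ∈ A) with hχ
  set E : Set ℕ := {n | Erow χ n = true} with hE
  -- a code for the r.e. set A
  have h1 : Partrec fun n : ℕ =>
      (Part.assert (n ∈ A) fun _ => Part.some ()).map fun _ => (0 : ℕ) :=
    Partrec.map hA (Computable.const 0).to₂
  obtain ⟨c, hc⟩ := Nat.Partrec.Code.exists_code.1 (Partrec.nat_iff.1 h1)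
  set q : ℕ → ℕ → Bool := fun s n => (Nat.Partrec.Code.evaln s c n).isSome with hq
  have hqA : ∀ n, n ∈ A ↔ ∃ s, q s n = true := by
    intro n
    have hdom : (Nat.Partrec.Code.eval c n).Dom ↔ n ∈ A := by
      rw [hc]
      exact ⟨fun h => h.1, fun h => ⟨h, trivial⟩⟩
    rw [← hdom, Part.dom_iff_mem]
    constructor
    · rintro ⟨x, hx⟩
      obtain ⟨k, hk⟩ := Nat.Partrec.Code.evaln_complete.1 hx
      exact ⟨k, by simp [hq, Option.isSome_iff_exists]; exact ⟨x, hk⟩⟩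
    · rintro ⟨s, hs⟩
      obtain ⟨x, hx⟩ := Option.isSome_iff_exists.1 hs
      exact ⟨x, Nat.Partrec.Code.evaln_complete.2 ⟨s, hx⟩⟩
  have hqmono : ∀ {s s' n : ℕ}, s ≤ s' → q s n = true → q s' n = true := by
    intro s s' n hss h
    obtain ⟨x, hx⟩ := Option.isSome_iff_exists.1 h
    exact Option.isSome_iff_exists.2 ⟨x, Nat.Partrec.Code.evaln_mono hss hx⟩
  have hqbound : ∀ {s n : ℕ}, q s n = true → n < s := by
    intro s n h
    obtain ⟨x, hx⟩ := Option.isSome_iff_exists.1 h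
    exact Nat.Partrec.Code.evaln_bound hx
  set a : ℕ → ℕ → Bool := fun s n => Erow (q s) n with ha
  -- computability of the approximation
  have hq_pr : Primrec fun p : ℕ × ℕ => q p.1 p.2 :=
    Primrec.option_isSome.comp
      (Nat.Partrec.Code.primrec_evaln.comp
        ((Primrec.fst.pair (Primrec.const c)).pair Primrec.snd))
  have hcnt_pr : Primrec fun p : ℕ × ℕ => cnt (q p.1) p.2 := by
    have hf : Primrec fun s : ℕ => (cond (q s 0) 0 1 : ℕ) :=
      Primrec.cond (hq_pr.comp (Primrec.id.pair (Primrec.const 0)))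
        (Primrec.const 0) (Primrec.const 1)
    have hg : Primrec₂ fun (s : ℕ) (p : ℕ × ℕ) => p.2 + cond (q s (p.1 + 1)) 0 1 :=
      Primrec₂.mk ((Primrec.nat_add.comp (Primrec.snd.comp Primrec.snd)
        (Primrec.cond (hq_pr.comp (Primrec.fst.pair
            (Primrec.succ.comp (Primrec.fst.comp Primrec.snd))))
          (Primrec.const 0) (Primrec.const 1))))
    have h2 := Primrec.nat_rec hf hg
    have h3 : Primrec fun p : ℕ × ℕ =>
        (Nat.rec (motive := fun _ => ℕ) (cond (q p.1 0) 0 1)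
          (fun m IH => IH + cond (q p.1 (m + 1)) 0 1) p.2 : ℕ) := h2
    refine h3.of_eq fun p => ?_
    rcases p with ⟨s, n⟩
    induction n with
    | zero => rfl
    | succ n ih => simp only [cnt_succ, ← ih]
  have hcomp : Computable₂ a := by
    have hpr : Primrec fun p : ℕ × ℕ => a p.1 p.2 := by
      have hdec : Primrec fun p : ℕ × ℕ => (decide (cnt (q p.1) p.2 % 2 = 1) : Bool) :=
        (Primrec.eq.comp (Primrec.nat_mod.comp hcnt_pr (Primrec.const 2)) (Primrec.const 1)).decide
      exact (Primrec.cond hq_pr (Primrec.const true) hdec).of_eq fun p => by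
        cases hqq : q p.1 p.2 <;> simp [ha, Erow, hqq]
    exact hpr.to_comp
  -- lexicographic monotonicity
  have hmono : ∀ s, BoolLexLE (a s) (a (s + 1)) := by
    intro s
    exact lex_mono (q s) (q (s + 1)) (s + 2)
      (fun m hm => hqmono (Nat.le_succ s) hm)
      (fun m hm => by
        cases h : q (s + 1) m
        · rfl
        · exact absurd (hqbound h) (by omega))
  -- pointwise convergence
  have hsingle : ∀ m, ∃ t, ∀ s, t ≤ s → q s m = χ m := by
    intro m
    by_cases hm : m ∈ A
    · obtain ⟨t, ht⟩ := (hqA m).1 hm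
      exact ⟨t, fun s hs => by rw [hqmono hs ht]; simp [hχ, hm]⟩
    · refine ⟨0, fun s _ => ?_⟩
      cases h : q s m
      · simp [hχ, hm]
      · exact absurd ((hqA m).2 ⟨s, h⟩) hm
  choose t ht using hsingle
  have hlim : ∀ n, ∃ s₀, ∀ s, s₀ ≤ s → (a s n = true ↔ n ∈ E) := by
    intro n
    refine ⟨(Finset.range (n + 1)).sup t, fun s hs => ?_⟩
    have hrow : ∀ m ≤ n, q s m = χ m := by
      intro m hm
      exact ht m s (le_trans (Finset.le_sup (Finset.mem_range.2 (by omega))) hs)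
    have : a s n = Erow χ n := Erow_congr n hrow
    rw [this]
    exact Iff.rfl
  -- E is a left-r.e. set
  have hEleft : LeftRE E := ⟨a, hcomp, hmono, hlim⟩
  -- A ⊆ E
  have hAE : ∀ n, n ∈ A → n ∈ E := by
    intro n h
    show Erow χ n = true
    simp [Erow, hχ, h]
  -- the complement of A is infinite
  have hcompl : {n | χ n = false}.Infinite := by
    refine (hAco.2).mono ?_
    intro n hn
    simp only [Set.mem_diff, Set.mem_univ, true_and] at hn
    simp [hχ, hn]
  -- consecutive complement elements, one with odd count, one with even count
  have pair : ∀ k, ∃ n0 n1, k < n0 ∧ n0 < n1 ∧ χ n0 = false ∧ χ n1 = false ∧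
      cnt χ n1 = cnt χ n0 + 1 := by
    intro k
    obtain ⟨n0, hn0mem, hn0gt⟩ := hcompl.exists_gt k
    have hex : ∃ m, n0 < m ∧ χ m = false := by
      obtain ⟨m, hm, hgt⟩ := hcompl.exists_gt n0
      exact ⟨m, hgt, hm⟩
    set m1 := Nat.find hex with hm1
    obtain ⟨hdm1, hfm1⟩ : n0 < m1 ∧ χ m1 = false := Nat.find_spec hex
    have hbet : ∀ m, n0 < m → m < m1 → χ m = true := by
      intro m h1 h2
      have := Nat.find_min hex h2
      simp only [h1, true_and, Bool.not_eq_false] at this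
      exact this
    exact ⟨n0, m1, hn0gt, hdm1, hn0mem, hfm1, cnt_step hdm1 hfm1 hbet⟩
  have hnotmemA : ∀ n, χ n = false → n ∉ A := by
    intro n h hn
    simp [hχ, hn] at h
  have hEA_inf : (E \ A).Infinite := by
    refine Set.infinite_of_forall_exists_gt fun k => ?_
    obtain ⟨n0, n1, hk0, h01, hc0, hc1, hcnt⟩ := pair k
    by_cases hp : cnt χ n0 % 2 = 1
    · refine ⟨n0, ⟨?_, hnotmemA n0 hc0⟩, hk0⟩
      show Erow χ n0 = true
      simp [Erow, hp]
    · refine ⟨n1, ⟨?_, hnotmemA n1 hc1⟩, by omega⟩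
      show Erow χ n1 = true
      simp only [Erow, hcnt, Bool.or_eq_true, decide_eq_true_eq]
      right; omega
  have hEc_inf : (Set.univ \ E).Infinite := by
    refine Set.infinite_of_forall_exists_gt fun k => ?_
    obtain ⟨n0, n1, hk0, h01, hc0, hc1, hcnt⟩ := pair k
    by_cases hp : cnt χ n0 % 2 = 1
    · refine ⟨n1, ⟨trivial, ?_⟩, by omega⟩
      show ¬ Erow χ n1 = true
      simp only [Erow, hcnt, hc1, Bool.false_or, decide_eq_true_eq]
      omega
    · refine ⟨n0, ⟨trivial, ?_⟩, hk0⟩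
      show ¬ Erow χ n0 = true
      simp only [Erow, hc0, Bool.false_or, decide_eq_true_eq]
      omega
  refine hmax3 ⟨E, hEleft, ⟨?_, hEA_inf⟩, ⟨?_, hEc_inf⟩⟩
  · show (A \ E).Finite
    have hsub : A \ E = ∅ := by
      ext n
      simp only [Set.mem_diff, Set.mem_empty_iff_false, iff_false, not_and, not_not]
      exact fun h => hAE n h
    rw [hsub]; exact Set.finite_empty
  · show (E \ Set.univ).Finite
    rw [Set.diff_univ]; exact Set.finite_empty


end LeftREPaper
end
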